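/- arXiv:1612.00765 — 2 statements merged into one kernel-verified Lean document; each statement's English description precedes it below -/
import Mathlib

section
/- Let p be prime, k even, ε ∈ {±1}, and let A be a commutative ring. Let λ ∈ A and define a sequence (a_n) in A by a_0 = 1, a_1 = λ, and the Hecke recurrence a_n = λ·a_{n−1} − p^{k−1}·a_{n−2} for n ≥ 2. Then for all n ≥ 1, a_n + ε p^{k/2} a_{n−1} ≡ (−ε p^{k/2−1})^n modulo the ideal of A generated by λ + ε p^{k/2−1}(p+1). Consequently, if f is a newform of level divisible exactly once by p with Atkin–Lehner eigenvalue ε at p (so that its p^n-th Hecke eigenvalue is (−ε p^{k/2−1})^n) and g is a newform of level prime to p with p-th Hecke eigenvalue λ_p, then the p^n-th Fourier coefficients of f and of g_p^{(ε)}(z) = g(z) + ε p^{k/2}g(pz) are congruent modulo any ideal containing λ_p + ε p^{k/2−1}(p+1). -/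
/-- **Hecke recurrence congruence.**
Let `p` be prime, `k` even (a modular weight, so `k ≥ 2`), `ε ∈ {±1}`, and let `A` be a
commutative ring.  Let `λ ∈ A` and define a sequence `(a n)` in `A` by `a 0 = 1`,
`a 1 = λ` and the Hecke recurrence `a n = λ·a (n-1) - p^(k-1)·a (n-2)` for `n ≥ 2`.
Then for all `n ≥ 1`,
`a n + ε p^(k/2) a (n-1) ≡ (-ε p^(k/2-1))^n` modulo the ideal of `A` generated by
`λ + ε p^(k/2-1) (p+1)`.
Consequently (taking `a n = λ_{pⁿ}` to be the `pⁿ`-th Hecke eigenvalue of a newform `g` of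
level prime to `p`, so that `a n + ε p^(k/2) a (n-1)` is the `pⁿ`-th Fourier coefficient of
`g_p^{(ε)}(z) = g(z) + ε p^(k/2) g(pz)`, while `(-ε p^(k/2-1))^n` is the `pⁿ`-th Fourier
coefficient of a newform whose level is exactly divisible by `p` with Atkin–Lehner
eigenvalue `ε` at `p`): the `pⁿ`-th Fourier coefficients of the two forms are congruent
modulo any ideal `J` containing `λ + ε p^(k/2-1) (p+1)`. -/
theorem hecke_recurrence_congruence {A : Type*} [CommRing A]
    (p k : ℕ) (hp : p.Prime) (hk : Even k) (hk2 : 2 ≤ k)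
    (ε : A) (hε : ε = 1 ∨ ε = -1) (lam : A) (a : ℕ → A)
    (ha0 : a 0 = 1) (ha1 : a 1 = lam)
    (hrec : ∀ n, 2 ≤ n → a n = lam * a (n - 1) - (p : A) ^ (k - 1) * a (n - 2)) :
    (∀ n, 1 ≤ n →
      a n + ε * (p : A) ^ (k / 2) * a (n - 1) - (-ε * (p : A) ^ (k / 2 - 1)) ^ n ∈
        Ideal.span {lam + ε * (p : A) ^ (k / 2 - 1) * ((p : A) + 1)}) ∧
    (∀ J : Ideal A, lam + ε * (p : A) ^ (k / 2 - 1) * ((p : A) + 1) ∈ J →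
      ∀ n, 1 ≤ n →
        (-ε * (p : A) ^ (k / 2 - 1)) ^ n -
          (a n + ε * (p : A) ^ (k / 2) * a (n - 1)) ∈ J) := by
  obtain ⟨r, hr⟩ := hk
  obtain ⟨m, rfl⟩ : ∃ m, k = 2 * m + 2 := ⟨r - 1, by omega⟩
  have hε2 : ε * ε = 1 := by rcases hε with h | h <;> simp [h]
  have h1 : (2 * m + 2) / 2 = m + 1 := by omega
  have h2 : (2 * m + 2) / 2 - 1 = m := by omega
  have h3 : 2 * m + 2 - 1 = 2 * m + 1 := by omega
  rw [h3] at hrec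
  simp only [h1, h2]
  set c : A := lam + ε * (p : A) ^ m * ((p : A) + 1) with hc
  have key : ∀ n, c ∣ (a (n + 1) + ε * (p : A) ^ (m + 1) * a n
      - (-ε * (p : A) ^ m) ^ (n + 1)) := by
    intro n
    induction n with
    | zero =>
      refine ⟨1, ?_⟩
      rw [ha0, ha1, hc]; ring
    | succ n ih =>
      obtain ⟨t, ht⟩ := ih
      refine ⟨a (n + 1) + (-ε * (p : A) ^ m) * t, ?_⟩
      have hr2 : a (n + 2) = lam * a (n + 1) - (p : A) ^ (2 * m + 1) * a n := by
        simpa using hrec (n + 2) (by omega)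
      linear_combination hr2 + (-ε * (p : A) ^ m) * ht
        + (p : A) ^ (2 * m + 1) * a n * hε2 + a (n + 1) * hc
  constructor
  · intro n hn
    obtain ⟨n, rfl⟩ : ∃ n', n = n' + 1 := ⟨n - 1, by omega⟩
    rw [Ideal.mem_span_singleton]
    simpa using key n
  · intro J hJ n hn
    obtain ⟨n, rfl⟩ : ∃ n', n = n' + 1 := ⟨n - 1, by omega⟩
    have hmem : a (n + 1) + ε * (p : A) ^ (m + 1) * a n
        - (-ε * (p : A) ^ m) ^ (n + 1) ∈ J := by
      obtain ⟨t, ht⟩ := key n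
      rw [ht]
      exact J.mul_mem_right t hJ
    have := J.neg_mem hmem
    simpa [neg_sub] using this
end

section
/- Let N ≥ 1, w ≥ 2 even, and let P₀ = 𝟏|(1−S) ∈ W_w(N), where 𝟏 ∈ V_w(N) is the tuple whose every component is the constant polynomial 1. Then for every T̃_N ∈ R_N satisfying T_N^∞(1−S) − (1−S)T̃_N ∈ (1−T)R_N, and for every coset A = Γ₀(N)[[*,*],[z,t]] ∈ Γ₀(N)\Γ₁, one has P₀|_Θ T̃_N(A) = N_z^w − N_t^w X^w, where N_a := N/gcd(N,a). -/
open Matrix MatrixGroups CongruenceSubgroup Polynomial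

noncomputable section

namespace PP

abbrev SL2Z := Matrix.SpecialLinearGroup (Fin 2) ℤ
abbrev Mat2 := Matrix (Fin 2) (Fin 2) ℤ

def Sm : SL2Z := ⟨!![0,-1;1,0], by norm_num [Matrix.det_fin_two_of]⟩
def Um : SL2Z := ⟨!![1,-1;1,0], by norm_num [Matrix.det_fin_two_of]⟩
def Tm : SL2Z := ⟨!![1,1;0,1], by norm_num [Matrix.det_fin_two_of]⟩

/-- The coset space `Γ₀(N)\SL₂(ℤ)`. -/
def Coset (N : ℕ) := Quotient (QuotientGroup.rightRel (Gamma0 N))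

def mkCoset (N : ℕ) (g : SL2Z) : Coset N := Quotient.mk (QuotientGroup.rightRel (Gamma0 N)) g

/-- Right multiplication of a right coset by a group element. -/
def cosetMul {N : ℕ} (A : Coset N) (γ : SL2Z) : Coset N :=
  Quotient.map (· * γ) (by
    intro a b h
    exact QuotientGroup.rightRel_apply.mpr
      (by simpa [mul_assoc] using QuotientGroup.rightRel_apply.mp h)) A

/-- The weight `-w` action of an integral matrix on polynomials:
`P ↦ P((aX+b)/(cX+d))·(cX+d)^w`, for polynomials of degree at most `w`. -/
def polySlash {R : Type*} [CommRing R] (w : ℕ) (g : Mat2) (P : Polynomial R) : Polynomial R :=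
  ∑ i ∈ Finset.range (w+1), Polynomial.C (P.coeff i) *
    (Polynomial.C (g 0 0 : R) * Polynomial.X + Polynomial.C (g 0 1 : R))^i *
    (Polynomial.C (g 1 0 : R) * Polynomial.X + Polynomial.C (g 1 1 : R))^(w-i)

/-- The action `P|γ(A) = P(Aγ⁻¹)|_{-w}γ` on tuples of polynomials indexed by cosets. -/
def actV {R : Type*} [CommRing R] {N : ℕ} (w : ℕ) (γ : SL2Z) (P : Coset N → Polynomial R) :
    Coset N → Polynomial R :=
  fun A => polySlash w (γ : Mat2) (P (cosetMul A γ⁻¹))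

/-- The space `W_w(N)_{/R}` of period polynomials of degree `w` for `Γ₀(N)` over `R`. -/
def WSet (R : Type*) [CommRing R] (w N : ℕ) : Set (Coset N → Polynomial R) :=
  {P | (∀ A, (P A).degree ≤ w) ∧ (P + actV w Sm P = 0) ∧
    (P + actV w Um P + actV w (Um * Um) P = 0)}

/-- The trace map `tr^N_M : V_w(N) → V_w(M)`, `tr(P)(C) = ∑_B P(B·C)` over
cosets `B ∈ Γ₀(N)\Γ₀(M)`. -/
def trMap (R : Type*) [CommRing R] (N M : ℕ) (P : Coset N → Polynomial R) :
    Coset M → Polynomial R :=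
  fun C => ∑ᶠ B : Quotient (QuotientGroup.rightRel ((Gamma0 N).subgroupOf (Gamma0 M))),
    P (mkCoset N ((Quotient.out B : Gamma0 M) * Quotient.out C))

/-- The double coset `Θ_N = Γ₀(N)·w_N`: integral matrices of determinant `N`
whose entries `a, c, d` are all divisible by `N`. -/
def ThetaSet (N : ℕ) : Set Mat2 :=
  {m | m.det = (N : ℤ) ∧ (N:ℤ) ∣ m 0 0 ∧ (N:ℤ) ∣ m 1 0 ∧ (N:ℤ) ∣ m 1 1}

/-- The action `P|_Σ m` of a single matrix `m` of determinant `n`, relative to a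
double coset (or union of cosets) `Σ ⊆ M_n`:  `P|_Σ m (A) = P(A_m)|_{-w} m` if
`m·A⁻¹ = A_m⁻¹·m_A` with `A_m ∈ Γ₁`, `m_A ∈ Σ`, and `0` otherwise. -/
def sigmaAct {R : Type*} [CommRing R] (N : ℕ) (w : ℕ) (Sig : Set Mat2) (m : Mat2)
    (P : Coset N → Polynomial R) (A : Coset N) : Polynomial R :=
  @dite _ (∃ q : SL2Z × SL2Z, mkCoset N q.2 = A ∧
      ((q.1 : Mat2) * m * ((q.2⁻¹ : SL2Z) : Mat2)) ∈ Sig) (Classical.dec _)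
    (fun h => polySlash w m (P (mkCoset N h.choose.1)))
    (fun _ => 0)

/-- Linear extension of `sigmaAct` to elements of `R_n = ℤ[M_n]`. -/
def sigmaActR {R : Type*} [CommRing R] (N : ℕ) (w : ℕ) (Sig : Set Mat2)
    (T : MonoidAlgebra ℤ Mat2) (P : Coset N → Polynomial R) : Coset N → Polynomial R :=
  fun A => T.coeff.sum (fun m c => c • sigmaAct N w Sig m P A)

/-- The Atkin–Lehner action `P|_Θ m`. -/
def thetaAct {R : Type*} [CommRing R] (N : ℕ) (w : ℕ) (m : Mat2)
    (P : Coset N → Polynomial R) (A : Coset N) : Polynomial R :=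
  sigmaAct N w (ThetaSet N) m P A

/-- `P|_Θ T̃` for `T̃ ∈ ℤ[M_N]`. -/
def thetaActR {R : Type*} [CommRing R] (N : ℕ) (w : ℕ) (T : MonoidAlgebra ℤ Mat2)
    (P : Coset N → Polynomial R) : Coset N → Polynomial R :=
  sigmaActR N w (ThetaSet N) T P

/-- Membership in `R_n ⊂ ℤ[M_2(ℤ)]`: supported on matrices of determinant `n`. -/
def memRn (n : ℕ) (T : MonoidAlgebra ℤ Mat2) : Prop :=
  ∀ m ∈ T.coeff.support, m.det = (n : ℤ)

/-- `x` lies in `(1 - T)·R_n`. -/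
def memOneSubTRn (n : ℕ) (x : MonoidAlgebra ℤ Mat2) : Prop :=
  ∃ Y : MonoidAlgebra ℤ Mat2, memRn n Y ∧
    x = (MonoidAlgebra.single (1 : Mat2) (1:ℤ) - MonoidAlgebra.single (Tm : Mat2) (1:ℤ)) * Y

/-- `Srep` is a system of representatives, fixing `∞`, for `Γ₁\M_n`. -/
def IsInfRepSystem (n : ℕ) (Srep : Finset Mat2) : Prop :=
  (∀ m ∈ Srep, m.det = (n:ℤ) ∧ m 1 0 = 0) ∧
    ∀ m : Mat2, m.det = (n:ℤ) → ∃! s, s ∈ Srep ∧ ∃ γ : SL2Z, m = (γ : Mat2) * s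

/-- `T̃_n` is a valid Hecke element in the sense of Choie–Zagier: for some system of
representatives `Srep` fixing `∞` of `Γ₁\M_n`, with `T_n^∞ = ∑_{m ∈ Srep} m`, one has
`T_n^∞ (1-S) - (1-S) T̃_n ∈ (1-T) R_n`. -/
def IsHeckeElt (n : ℕ) (T : MonoidAlgebra ℤ Mat2) : Prop :=
  memRn n T ∧ ∃ Srep : Finset Mat2, IsInfRepSystem n Srep ∧
    memOneSubTRn n
      ((∑ m ∈ Srep, MonoidAlgebra.single m (1:ℤ)) *
          (MonoidAlgebra.single (1 : Mat2) (1:ℤ) - MonoidAlgebra.single (Sm : Mat2) (1:ℤ)) -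
        (MonoidAlgebra.single (1 : Mat2) (1:ℤ) - MonoidAlgebra.single (Sm : Mat2) (1:ℤ)) * T)

/-- The `p`-new subspace `W_w(N)^{p-new}_{/R}`, relative to a Hecke element `T̃_N`. -/
def pNew (R : Type*) [CommRing R] (w N M : ℕ) (T : MonoidAlgebra ℤ Mat2) :
    Set (Coset N → Polynomial R) :=
  {P | P ∈ WSet R w N ∧ trMap R N M P = 0 ∧ trMap R N M (thetaActR N w T P) = 0}

end PP

namespace PP

open Polynomial

/-! ### Auxiliary lemmas -/

lemma mul_apply₂ (A B : Mat2) (i j : Fin 2) : (A * B) i j = A i 0 * B 0 j + A i 1 * B 1 j := by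
  rw [Matrix.mul_apply, Fin.sum_univ_two]

lemma sl2_det (γ : SL2Z) :
    (γ:Mat2) 0 0 * (γ:Mat2) 1 1 - (γ:Mat2) 0 1 * (γ:Mat2) 1 0 = 1 := by
  rw [← Matrix.det_fin_two]; exact γ.prop

lemma coe_inv_mul_self (γ : SL2Z) : ((γ⁻¹ : SL2Z) : Mat2) * (γ : Mat2) = 1 := by
  rw [← Matrix.SpecialLinearGroup.coe_mul, inv_mul_cancel, Matrix.SpecialLinearGroup.coe_one]

lemma coe_mul_inv_self (γ : SL2Z) : (γ : Mat2) * ((γ⁻¹ : SL2Z) : Mat2) = 1 := by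
  rw [← Matrix.SpecialLinearGroup.coe_mul, mul_inv_cancel, Matrix.SpecialLinearGroup.coe_one]

lemma inv_coe_cancel (γ : SL2Z) (m : Mat2) : ((γ⁻¹:SL2Z) : Mat2) * ((γ : Mat2) * m) = m := by
  rw [← mul_assoc, coe_inv_mul_self, one_mul]

lemma exists_shift (γ₁ : SL2Z) (m Wm : Mat2) :
    (∃ γ : SL2Z, (γ₁ : Mat2) * m = (γ : Mat2) * Wm) ↔ ∃ γ : SL2Z, m = (γ : Mat2) * Wm := by
  constructor
  · rintro ⟨γ, h⟩
    exact ⟨γ₁⁻¹ * γ,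
      by rw [Matrix.SpecialLinearGroup.coe_mul, mul_assoc, ← h, inv_coe_cancel]⟩
  · rintro ⟨γ, rfl⟩
    exact ⟨γ₁ * γ, by rw [Matrix.SpecialLinearGroup.coe_mul, mul_assoc]⟩

/-! ### polySlash evaluations -/

lemma polySlash_one (w : ℕ) (m : Mat2) :
    polySlash (R := ℂ) w m 1 = (C (m 1 0 : ℂ) * X + C (m 1 1 : ℂ)) ^ w := by
  rw [polySlash, Finset.sum_eq_single 0]
  · simp
  · intro i hi hne; simp [coeff_one, hne]
  · intro h; simp at h

lemma polySlash_Xpow (w : ℕ) (m : Mat2) :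
    polySlash (R := ℂ) w m (X ^ w) = (C (m 0 0 : ℂ) * X + C (m 0 1 : ℂ)) ^ w := by
  rw [polySlash, Finset.sum_eq_single w]
  · simp
  · intro i hi hne; simp [coeff_X_pow, hne]
  · intro h; exact absurd (Finset.self_mem_range_succ w) h

lemma polySlash_sub (w : ℕ) (m : Mat2) (P Q : Polynomial ℂ) :
    polySlash w m (P - Q) = polySlash w m P - polySlash w m Q := by
  simp only [polySlash, coeff_sub, map_sub, sub_mul, Finset.sum_sub_distrib]

/-! ### the coset condition -/

lemma mk_eq_exists {N : ℕ} {a b : SL2Z} (h : mkCoset N a = mkCoset N b) :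
    ∃ δ : SL2Z, ((N:ℤ) ∣ (δ : Mat2) 1 0) ∧ a = δ * b := by
  have h2 := Quotient.eq.mp h
  have h3 : b * a⁻¹ ∈ Gamma0 N := QuotientGroup.rightRel_apply.mp h2
  have h4 : a * b⁻¹ ∈ Gamma0 N := by
    have := (Gamma0 N).inv_mem h3
    simpa using this
  refine ⟨a * b⁻¹, ?_, by group⟩
  exact (ZMod.intCast_zmod_eq_zero_iff_dvd _ N).mp (Gamma0_mem.mp h4)

lemma theta_iff (N : ℕ) (hN : 1 ≤ N) (M : Mat2) :
    M ∈ ThetaSet N ↔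
      ∃ δ : SL2Z, ((N:ℤ) ∣ (δ : Mat2) 1 0) ∧ M = (δ : Mat2) * !![0,-1;(N:ℤ),0] := by
  have hNz : (N:ℤ) ≠ 0 := by positivity
  constructor
  · rintro ⟨hdet, ⟨ka, hka⟩, ⟨kc, hkc⟩, hd⟩
    have hdet2 : M 0 0 * M 1 1 - M 0 1 * M 1 0 = N := by rw [← Matrix.det_fin_two]; exact hdet
    have hdet3 : ka * M 1 1 - M 0 1 * kc = 1 := by
      have : (N:ℤ) * (ka * M 1 1 - M 0 1 * kc) = (N:ℤ) * 1 := by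
        linear_combination (-(M 1 1)) * hka + (M 0 1) * hkc + hdet2
      exact mul_left_cancel₀ hNz this
    refine ⟨⟨!![-(M 0 1), ka; -(M 1 1), kc],
      by rw [Matrix.det_fin_two_of]; linear_combination hdet3⟩, ?_, ?_⟩
    · show (N:ℤ) ∣ -(M 1 1); exact dvd_neg.mpr hd
    · ext i j
      fin_cases i <;> fin_cases j <;>
        simp [mul_apply₂, hka, hkc] <;> ring
  · rintro ⟨δ, hdvd, rfl⟩
    have hdet : ((δ:Mat2) * !![0,-1;(N:ℤ),0]).det = N := by
      rw [Matrix.det_mul, Matrix.SpecialLinearGroup.det_coe, Matrix.det_fin_two_of]; ring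
    refine ⟨hdet, ?_, ?_, ?_⟩
    · rw [mul_apply₂]; simp
    · rw [mul_apply₂]; simp
    · rw [mul_apply₂]; simpa using dvd_neg.mpr hdvd

lemma wN_comm (N : ℕ) (δ : SL2Z) (hdvd : (N:ℤ) ∣ (δ:Mat2) 1 0) :
    ∃ δ' : SL2Z, (!![0,-1;(N:ℤ),0] : Mat2) * (δ:Mat2) = (δ':Mat2) * !![0,-1;(N:ℤ),0] := by
  obtain ⟨k, hk⟩ := hdvd
  have hd := sl2_det δ
  refine ⟨⟨!![(δ:Mat2) 1 1, -k; -((N:ℤ))*(δ:Mat2) 0 1, (δ:Mat2) 0 0], by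
    rw [Matrix.det_fin_two_of]; linear_combination hd + (δ:Mat2) 0 1 * hk⟩, ?_⟩
  ext i j
  fin_cases i <;> fin_cases j <;> simp [mul_apply₂, hk] <;> ring

lemma cnd_iff {N : ℕ} (hN : 1 ≤ N) (m : Mat2) (g : SL2Z) :
    (∃ q : SL2Z × SL2Z, mkCoset N q.2 = mkCoset N g ∧
      ((q.1 : Mat2) * m * ((q.2⁻¹ : SL2Z) : Mat2)) ∈ ThetaSet N)
    ↔ ∃ γ : SL2Z, m = (γ : Mat2) * (!![0,-1;(N:ℤ),0] * (g : Mat2)) := by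
  constructor
  · rintro ⟨q, hmk, hθ⟩
    obtain ⟨δ, hδd, hδ⟩ := mk_eq_exists hmk
    obtain ⟨γ₀, hγ₀d, hγ₀⟩ := (theta_iff N hN _).mp hθ
    obtain ⟨δ', hδ'⟩ := wN_comm N δ hδd
    refine ⟨q.1⁻¹ * γ₀ * δ', ?_⟩
    have hq2 : (q.2 : Mat2) = (δ : Mat2) * (g : Mat2) := by
      rw [hδ, Matrix.SpecialLinearGroup.coe_mul]
    have key : m = ((q.1⁻¹ : SL2Z) : Mat2) * ((q.1 : Mat2) * m * ((q.2⁻¹:SL2Z) : Mat2))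
        * (q.2 : Mat2) := by
      calc m = (((q.1⁻¹:SL2Z):Mat2) * (q.1:Mat2)) * m
            * (((q.2⁻¹:SL2Z):Mat2) * (q.2:Mat2)) := by
            rw [coe_inv_mul_self, coe_inv_mul_self, one_mul, mul_one]
        _ = _ := by simp only [mul_assoc]
    have h9 : (!![0,-1;(N:ℤ),0] : Mat2) * ((δ:Mat2) * (g:Mat2))
        = (δ':Mat2) * (!![0,-1;(N:ℤ),0] * (g:Mat2)) := by
      rw [← mul_assoc, hδ', mul_assoc]
    rw [key, hγ₀, hq2, Matrix.SpecialLinearGroup.coe_mul, Matrix.SpecialLinearGroup.coe_mul]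
    simp only [mul_assoc]
    rw [h9]
  · rintro ⟨γ, rfl⟩
    refine ⟨(γ⁻¹, g), rfl, ?_⟩
    show ((γ⁻¹:SL2Z):Mat2) * ((γ:Mat2) * (!![0,-1;(N:ℤ),0] * (g:Mat2))) * ((g⁻¹:SL2Z):Mat2)
      ∈ ThetaSet N
    have hcan : ((γ⁻¹:SL2Z):Mat2) * ((γ:Mat2) * (!![0,-1;(N:ℤ),0] * (g:Mat2)))
        * ((g⁻¹:SL2Z):Mat2) = !![0,-1;(N:ℤ),0] := by
      rw [inv_coe_cancel, mul_assoc, coe_mul_inv_self, mul_one]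
    rw [hcan]
    refine ⟨by rw [Matrix.det_fin_two_of]; ring, ?_, ?_, ?_⟩ <;> simp

/-! ### sigmaAct on constant tuples -/

lemma sigmaAct_const_pos {N w : ℕ} {Sig : Set Mat2} {m : Mat2} {p : Polynomial ℂ} {A : Coset N}
    (h : ∃ q : SL2Z × SL2Z, mkCoset N q.2 = A ∧
      ((q.1 : Mat2) * m * ((q.2⁻¹ : SL2Z) : Mat2)) ∈ Sig) :
    sigmaAct N w Sig m (fun _ => p) A = polySlash w m p := by
  unfold sigmaAct
  rw [dif_pos h]

lemma sigmaAct_const_neg {N w : ℕ} {Sig : Set Mat2} {m : Mat2} {p : Polynomial ℂ} {A : Coset N}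
    (h : ¬ ∃ q : SL2Z × SL2Z, mkCoset N q.2 = A ∧
      ((q.1 : Mat2) * m * ((q.2⁻¹ : SL2Z) : Mat2)) ∈ Sig) :
    sigmaAct N w Sig m (fun _ => p) A = 0 := by
  unfold sigmaAct
  rw [dif_neg h]

/-! ### the linear functional -/

def Lmap (e : Mat2 → Polynomial ℂ) (Xx : MonoidAlgebra ℤ Mat2) : Polynomial ℂ :=
  Xx.coeff.sum fun m c => c • e m

lemma Lmap_add (e : Mat2 → Polynomial ℂ) (Xx Yy : MonoidAlgebra ℤ Mat2) :
    Lmap e (Xx + Yy) = Lmap e Xx + Lmap e Yy := by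
  unfold Lmap; rw [MonoidAlgebra.coeff_add]; exact Finsupp.sum_add_index' (fun a => zero_smul ℤ (e a)) (fun a b₁ b₂ => add_smul b₁ b₂ (e a))

lemma Lmap_sub (e : Mat2 → Polynomial ℂ) (Xx Yy : MonoidAlgebra ℤ Mat2) :
    Lmap e (Xx - Yy) = Lmap e Xx - Lmap e Yy := by
  unfold Lmap; rw [MonoidAlgebra.coeff_sub]; exact Finsupp.sum_sub_index (fun a b₁ b₂ => sub_smul b₁ b₂ (e a))

lemma Lmap_single (e : Mat2 → Polynomial ℂ) (m : Mat2) (c : ℤ) :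
    Lmap e (MonoidAlgebra.single m c) = c • e m := by
  unfold Lmap; rw [MonoidAlgebra.coeff_single]; exact Finsupp.sum_single_index (zero_smul ℤ (e m))

lemma Lmap_mul_left (e : Mat2 → Polynomial ℂ) (a : Mat2) (Yy : MonoidAlgebra ℤ Mat2) :
    Lmap e (MonoidAlgebra.single a 1 * Yy) = Lmap (fun m => e (a * m)) Yy := by
  induction Yy using MonoidAlgebra.induction_linear with
  | zero => rw [mul_zero]; rfl
  | add f h hf hh => rw [mul_add, Lmap_add, Lmap_add, hf, hh]
  | single m c =>
      rw [MonoidAlgebra.single_mul_single, one_mul, Lmap_single, Lmap_single]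

lemma Lmap_mul_right (e : Mat2 → Polynomial ℂ) (a : Mat2) (Yy : MonoidAlgebra ℤ Mat2) :
    Lmap e (Yy * MonoidAlgebra.single a 1) = Lmap (fun m => e (m * a)) Yy := by
  induction Yy using MonoidAlgebra.induction_linear with
  | zero => rw [zero_mul]; rfl
  | add f h hf hh => rw [add_mul, Lmap_add, Lmap_add, hf, hh]
  | single m c =>
      rw [MonoidAlgebra.single_mul_single, mul_one, Lmap_single, Lmap_single]

lemma Lmap_congr {e₁ e₂ : Mat2 → Polynomial ℂ} (Xx : MonoidAlgebra ℤ Mat2)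
    (h : ∀ m, e₁ m = e₂ m) : Lmap e₁ Xx = Lmap e₂ Xx := by
  unfold Lmap
  exact Finsupp.sum_congr fun m _ => by rw [h m]

lemma Lmap_sub_fun (e₁ e₂ : Mat2 → Polynomial ℂ) (Xx : MonoidAlgebra ℤ Mat2) :
    Lmap (fun m => e₁ m - e₂ m) Xx = Lmap e₁ Xx - Lmap e₂ Xx := by
  unfold Lmap
  simp only [smul_sub]
  exact Finsupp.sum_sub

lemma Lmap_sum_singles (e : Mat2 → Polynomial ℂ) (F : Finset Mat2) :
    Lmap e (∑ s ∈ F, MonoidAlgebra.single s (1:ℤ)) = ∑ s ∈ F, e s := by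
  classical
  induction F using Finset.cons_induction with
  | empty => rw [Finset.sum_empty, Finset.sum_empty]; rfl
  | cons a F ha ih =>
      rw [Finset.sum_cons, Finset.sum_cons, Lmap_add, Lmap_single, ih, one_smul]

/-! ### the gcd computation -/

lemma dpow_eq (N : ℕ) (hN : 1 ≤ N) (w : ℕ) (hw : Even w) (γ : SL2Z) (s : Mat2)
    (hdet : s.det = (N:ℤ)) (hc : s 1 0 = 0) (x z : ℤ) (hcop : IsCoprime x z)
    (hW0 : (γ:Mat2) 0 0 * s 0 0 = -z) (hW1 : (γ:Mat2) 1 0 * s 0 0 = (N:ℤ) * x) :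
    (s 1 1)^w = ((N / Int.gcd (N:ℤ) z : ℕ) : ℤ)^w := by
  have had : s 0 0 * s 1 1 = (N:ℤ) := by
    rw [Matrix.det_fin_two, hc] at hdet; linear_combination hdet
  have hγcop : Int.gcd ((γ:Mat2) 0 0) ((γ:Mat2) 1 0) = 1 := by
    rw [← Int.isCoprime_iff_gcd_eq_one]
    exact ⟨(γ:Mat2) 1 1, -((γ:Mat2) 0 1), by linear_combination sl2_det γ⟩
  have h1 : Int.gcd (-z) ((N:ℤ)*x) = (s 0 0).natAbs := by
    rw [← hW0, ← hW1, Int.gcd_mul_right, hγcop, one_mul]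
  have h2 : Int.gcd (-z) ((N:ℤ)*x) = Int.gcd (N:ℤ) z := by
    have hx : Nat.Coprime x.natAbs z.natAbs := Int.isCoprime_iff_gcd_eq_one.mp hcop
    show ((-z).natAbs).gcd (((N:ℤ)*x).natAbs) = ((N:ℤ).natAbs).gcd (z.natAbs)
    rw [Int.natAbs_neg, Int.natAbs_mul, Nat.Coprime.gcd_mul_right_cancel_right _ hx,
      Nat.gcd_comm]
  have h3 : (s 0 0).natAbs * (s 1 1).natAbs = N := by
    have := congrArg Int.natAbs had
    rwa [Int.natAbs_mul, Int.natAbs_natCast] at this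
  have hGpos : 0 < (s 0 0).natAbs := by
    rcases Nat.eq_zero_or_pos (s 0 0).natAbs with h | h
    · rw [h, zero_mul] at h3; omega
    · exact h
  have h4 : (s 1 1).natAbs = N / Int.gcd (N:ℤ) z := by
    rw [← h2, h1]
    exact (Nat.div_eq_of_eq_mul_left hGpos (by rw [← h3, Nat.mul_comm])).symm
  calc (s 1 1)^w = ((s 1 1).natAbs : ℤ)^w := by
        rw [← Int.abs_eq_natAbs, Even.pow_abs hw]
    _ = ((N / Int.gcd (N:ℤ) z : ℕ) : ℤ)^w := by rw [h4]

end PP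

open PP

set_option maxHeartbeats 2000000 in
/-- **Proposition (Atkin–Lehner image of the Eisenstein period polynomial).**
Let `N ≥ 1`, `w ≥ 2` even, and let `P₀ = 𝟏|(1-S) ∈ W_w(N)` where `𝟏` is the tuple whose
every component is the constant polynomial `1`.  Then for every Hecke element
`T̃_N ∈ R_N` with `T_N^∞(1-S) - (1-S)T̃_N ∈ (1-T)R_N` (where `T_N^∞` is the sum of a
system of representatives fixing `∞` for `Γ₁\M_N`), and every coset
`A = Γ₀(N)[[*,*],[z,t]]`, one has `P₀|_Θ T̃_N(A) = N_z^w - N_t^w X^w`, where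
`N_a := N / gcd(N,a)`. -/
theorem thetaAct_eisenstein_period (N : ℕ) (hN : 1 ≤ N) (w : ℕ) (hw2 : 2 ≤ w)
    (hw : Even w)
    (Srep : Finset Mat2) (hSrep : IsInfRepSystem N Srep)
    (T : MonoidAlgebra ℤ Mat2) (hT : memRn N T)
    (hCZ : memOneSubTRn N
      ((∑ m ∈ Srep, MonoidAlgebra.single m (1:ℤ)) *
          (MonoidAlgebra.single (1 : Mat2) (1:ℤ) - MonoidAlgebra.single (Sm : Mat2) (1:ℤ)) -
        (MonoidAlgebra.single (1 : Mat2) (1:ℤ) - MonoidAlgebra.single (Sm : Mat2) (1:ℤ)) * T))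
    (g : SL2Z) :
    thetaActR N w T
      ((fun _ => 1) - actV w Sm (fun _ => (1 : Polynomial ℂ)))
      (mkCoset N g) =
    Polynomial.C (((N / Int.gcd (N : ℤ) ((g : Mat2) 1 0) : ℕ) : ℂ) ^ w) -
      Polynomial.C (((N / Int.gcd (N : ℤ) ((g : Mat2) 1 1) : ℕ) : ℂ) ^ w) *
        Polynomial.X ^ w := by
  classical
  obtain ⟨Y, hYmem, hYeq⟩ := hCZ
  set Wm : Mat2 := !![0,-1;(N:ℤ),0] * (g : Mat2) with hWmdef
  set SmI : Mat2 := !![0,1;-1,0] with hSmIdef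
  have hSm : (Sm : Mat2) = !![0,-1;1,0] := rfl
  have hTm : (Tm : Mat2) = !![1,1;0,1] := rfl
  have hSmI1 : (Sm : Mat2) * SmI = 1 := by
    rw [hSm, hSmIdef]; ext i j; fin_cases i <;> fin_cases j <;>
      simp [mul_apply₂, Matrix.one_apply]
  have hSmI2 : SmI * (Sm : Mat2) = 1 := by
    rw [hSm, hSmIdef]; ext i j; fin_cases i <;> fin_cases j <;>
      simp [mul_apply₂, Matrix.one_apply]
  have hP0 : ((fun _ => 1) - actV w Sm (fun _ => (1 : Polynomial ℂ)) : Coset N → Polynomial ℂ)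
      = fun _ => (1 - X ^ w : Polynomial ℂ) := by
    funext A
    have h1 : actV w Sm (fun _ => (1 : Polynomial ℂ)) A = X ^ w := by
      show polySlash w ((Sm : SL2Z) : Mat2) (1 : Polynomial ℂ) = X ^ w
      rw [polySlash_one, hSm]
      norm_num
    rw [Pi.sub_apply, h1]
  set e : Mat2 → Polynomial ℂ :=
    fun m => sigmaAct N w (ThetaSet N) m (fun _ => (1 : Polynomial ℂ)) (mkCoset N g) with hedef
  have e_pos : ∀ m : Mat2, (∃ γ : SL2Z, m = (γ:Mat2) * Wm) →
      e m = (C ((m 1 0 : ℤ) : ℂ) * X + C ((m 1 1 : ℤ) : ℂ)) ^ w := by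
    intro m h
    exact (sigmaAct_const_pos ((cnd_iff hN m g).mpr h)).trans (polySlash_one w m)
  have e_neg : ∀ m : Mat2, (¬ ∃ γ : SL2Z, m = (γ:Mat2) * Wm) → e m = 0 := by
    intro m h
    exact sigmaAct_const_neg (fun hc => h ((cnd_iff hN m g).mp hc))
  have eTm : ∀ m : Mat2, e ((Tm:Mat2) * m) = e m := by
    intro m
    by_cases h : ∃ γ : SL2Z, m = (γ:Mat2) * Wm
    · have h' : ∃ γ : SL2Z, (Tm:Mat2) * m = (γ:Mat2) * Wm := (exists_shift Tm m Wm).mpr h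
      rw [e_pos _ h', e_pos _ h]
      have c1 : ((Tm:Mat2) * m) 1 0 = m 1 0 := by rw [mul_apply₂, hTm]; norm_num
      have c2 : ((Tm:Mat2) * m) 1 1 = m 1 1 := by rw [mul_apply₂, hTm]; norm_num
      rw [c1, c2]
    · rw [e_neg _ h, e_neg _ (fun h' => h ((exists_shift Tm m Wm).mp h'))]
  have hstep1 : thetaActR N w T ((fun _ => 1) - actV w Sm (fun _ => (1:Polynomial ℂ)))
      (mkCoset N g) = Lmap (fun m => e m - e ((Sm:Mat2) * m)) T := by
    rw [hP0]
    show Lmap (fun m => sigmaAct N w (ThetaSet N) m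
      (fun _ => (1 - X ^ w : Polynomial ℂ)) (mkCoset N g)) T = _
    refine Lmap_congr T ?_
    intro m
    by_cases h : ∃ γ : SL2Z, m = (γ:Mat2) * Wm
    · rw [sigmaAct_const_pos ((cnd_iff hN m g).mpr h), polySlash_sub, polySlash_one,
        polySlash_Xpow, e_pos _ h, e_pos _ ((exists_shift Sm m Wm).mpr h)]
      have c1 : ((Sm:Mat2) * m) 1 0 = m 0 0 := by rw [mul_apply₂, hSm]; norm_num
      have c2 : ((Sm:Mat2) * m) 1 1 = m 0 1 := by rw [mul_apply₂, hSm]; norm_num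
      rw [c1, c2]
    · rw [sigmaAct_const_neg (fun hc => h ((cnd_iff hN m g).mp hc)), e_neg _ h,
        e_neg _ (fun h' => h ((exists_shift Sm m Wm).mp h')), sub_zero]
  have hTsplit : Lmap e ((MonoidAlgebra.single (1 : Mat2) (1:ℤ)
        - MonoidAlgebra.single (Sm : Mat2) (1:ℤ)) * T)
      = Lmap (fun m => e m - e ((Sm:Mat2) * m)) T := by
    rw [sub_mul, Lmap_sub, Lmap_mul_left, Lmap_mul_left, Lmap_sub_fun]
    congr 1
    exact Lmap_congr T (fun m => by rw [one_mul])
  have halg : (MonoidAlgebra.single (1:Mat2) (1:ℤ) - MonoidAlgebra.single (Sm:Mat2) (1:ℤ)) * T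
      = (∑ m ∈ Srep, MonoidAlgebra.single m (1:ℤ)) *
          (MonoidAlgebra.single (1:Mat2) (1:ℤ) - MonoidAlgebra.single (Sm:Mat2) (1:ℤ))
        - (MonoidAlgebra.single (1:Mat2) (1:ℤ) - MonoidAlgebra.single (Tm:Mat2) (1:ℤ)) * Y := by
    rw [← hYeq]
    exact (sub_sub_cancel _ _).symm
  have hzero : Lmap e ((MonoidAlgebra.single (1:Mat2) (1:ℤ)
      - MonoidAlgebra.single (Tm:Mat2) (1:ℤ)) * Y) = 0 := by
    rw [sub_mul, Lmap_sub, Lmap_mul_left, Lmap_mul_left]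
    have h1 : Lmap (fun m => e ((1:Mat2) * m)) Y = Lmap (fun m => e ((Tm:Mat2) * m)) Y :=
      Lmap_congr Y (fun m => by rw [one_mul, eTm m])
    rw [h1, sub_self]
  have hTinf1 : Lmap e ((∑ m ∈ Srep, MonoidAlgebra.single m (1:ℤ)) *
        (MonoidAlgebra.single (1:Mat2) (1:ℤ) - MonoidAlgebra.single (Sm:Mat2) (1:ℤ)))
      = (∑ s ∈ Srep, e s) - (∑ s ∈ Srep, e (s * (Sm:Mat2))) := by
    rw [mul_sub, Lmap_sub, Lmap_mul_right, Lmap_mul_right, Lmap_sum_singles, Lmap_sum_singles]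
    congr 1
    exact Finset.sum_congr rfl (fun s _ => by rw [mul_one])
  have hdetW : Wm.det = (N:ℤ) := by
    rw [hWmdef, Matrix.det_mul, Matrix.SpecialLinearGroup.det_coe, Matrix.det_fin_two_of]; ring
  obtain ⟨s₀, ⟨hs₀mem, γ₀, hγ₀⟩, huniq₀⟩ := hSrep.2 Wm hdetW
  set Wm' : Mat2 := Wm * SmI with hWm'def
  have hdetW' : Wm'.det = (N:ℤ) := by
    rw [hWm'def, Matrix.det_mul, hdetW, hSmIdef, Matrix.det_fin_two_of]; ring
  obtain ⟨s₁, ⟨hs₁mem, γ₁, hγ₁⟩, huniq₁⟩ := hSrep.2 Wm' hdetW'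
  have hsum0 : (∑ s ∈ Srep, e s) = e s₀ :=
    Finset.sum_eq_single_of_mem s₀ hs₀mem (fun s hs hne => e_neg s (by
      rintro ⟨γ, hγ⟩
      exact hne (huniq₀ s ⟨hs, γ⁻¹, by rw [hγ, inv_coe_cancel]⟩)))
  have hsum1 : (∑ s ∈ Srep, e (s * (Sm:Mat2))) = e (s₁ * (Sm:Mat2)) :=
    Finset.sum_eq_single_of_mem s₁ hs₁mem (fun s hs hne => e_neg _ (by
      rintro ⟨γ, hγ⟩
      have h' := congrArg (fun M : Mat2 => M * SmI) hγ
      simp only [mul_assoc, hSmI1, mul_one] at h'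
      exact hne (huniq₁ s ⟨hs, γ⁻¹, by rw [h', inv_coe_cancel]⟩)))
  have hz0 : s₀ 1 0 = 0 := (hSrep.1 s₀ hs₀mem).2
  have hdets₀ : s₀.det = (N:ℤ) := (hSrep.1 s₀ hs₀mem).1
  have hz1 : s₁ 1 0 = 0 := (hSrep.1 s₁ hs₁mem).2
  have hdets₁ : s₁.det = (N:ℤ) := (hSrep.1 s₁ hs₁mem).1
  have he0 : e s₀ = (C ((s₀ 1 1 : ℤ) : ℂ))^w := by
    rw [e_pos s₀ ⟨γ₀⁻¹, by rw [hγ₀, inv_coe_cancel]⟩, hz0]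
    norm_num
  have hW00 : Wm 0 0 = -((g:Mat2) 1 0) := by rw [hWmdef, mul_apply₂]; norm_num
  have hW10 : Wm 1 0 = (N:ℤ) * ((g:Mat2) 0 0) := by rw [hWmdef, mul_apply₂]; norm_num
  have hW01 : Wm 0 1 = -((g:Mat2) 1 1) := by rw [hWmdef, mul_apply₂]; norm_num
  have hW11 : Wm 1 1 = (N:ℤ) * ((g:Mat2) 0 1) := by rw [hWmdef, mul_apply₂]; norm_num
  have hcop0 : IsCoprime ((g:Mat2) 0 0) ((g:Mat2) 1 0) :=
    ⟨(g:Mat2) 1 1, -((g:Mat2) 0 1), by linear_combination sl2_det g⟩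
  have hγ00 : (γ₀:Mat2) 0 0 * s₀ 0 0 = -((g:Mat2) 1 0) := by
    have h := congrFun (congrFun hγ₀ 0) 0
    rw [hW00, mul_apply₂, hz0, mul_zero, add_zero] at h
    exact h.symm
  have hγ10 : (γ₀:Mat2) 1 0 * s₀ 0 0 = (N:ℤ) * ((g:Mat2) 0 0) := by
    have h := congrFun (congrFun hγ₀ 1) 0
    rw [hW10, mul_apply₂, hz0, mul_zero, add_zero] at h
    exact h.symm
  have hd0 : (s₀ 1 1)^w = ((N / Int.gcd (N:ℤ) ((g:Mat2) 1 0) : ℕ) : ℤ)^w :=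
    dpow_eq N hN w hw γ₀ s₀ hdets₀ hz0 _ _ hcop0 hγ00 hγ10
  have hW'00 : Wm' 0 0 = (g:Mat2) 1 1 := by
    rw [hWm'def, mul_apply₂, hW00, hW01, hSmIdef]; norm_num
  have hW'10 : Wm' 1 0 = (N:ℤ) * (-((g:Mat2) 0 1)) := by
    rw [hWm'def, mul_apply₂, hW10, hW11, hSmIdef]; norm_num
  have hcop1 : IsCoprime (-((g:Mat2) 0 1)) (-((g:Mat2) 1 1)) :=
    ⟨(g:Mat2) 1 0, -((g:Mat2) 0 0), by linear_combination sl2_det g⟩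
  have hγ00' : (γ₁:Mat2) 0 0 * s₁ 0 0 = -(-((g:Mat2) 1 1)) := by
    have h := congrFun (congrFun hγ₁ 0) 0
    rw [hW'00, mul_apply₂, hz1, mul_zero, add_zero] at h
    rw [neg_neg]
    exact h.symm
  have hγ10' : (γ₁:Mat2) 1 0 * s₁ 0 0 = (N:ℤ) * (-((g:Mat2) 0 1)) := by
    have h := congrFun (congrFun hγ₁ 1) 0
    rw [hW'10, mul_apply₂, hz1, mul_zero, add_zero] at h
    exact h.symm
  have hd1' : (s₁ 1 1)^w = ((N / Int.gcd (N:ℤ) (-((g:Mat2) 1 1)) : ℕ) : ℤ)^w :=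
    dpow_eq N hN w hw γ₁ s₁ hdets₁ hz1 _ _ hcop1 hγ00' hγ10'
  have hgcdneg : Int.gcd (N:ℤ) (-((g:Mat2) 1 1)) = Int.gcd (N:ℤ) ((g:Mat2) 1 1) := by simp
  have hd1 : (s₁ 1 1)^w = ((N / Int.gcd (N:ℤ) ((g:Mat2) 1 1) : ℕ) : ℤ)^w := by
    rw [← hgcdneg]; exact hd1'
  have he1 : e (s₁ * (Sm:Mat2)) = (C ((s₁ 1 1 : ℤ) : ℂ))^w * X^w := by
    have hcnd : ∃ γ : SL2Z, s₁ * (Sm:Mat2) = (γ:Mat2) * Wm := by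
      refine ⟨γ₁⁻¹, ?_⟩
      have hs₁' : s₁ = ((γ₁⁻¹:SL2Z):Mat2) * Wm' := by rw [hγ₁, inv_coe_cancel]
      rw [hs₁', hWm'def]
      simp only [mul_assoc]
      rw [hSmI2, mul_one]
    have c1 : (s₁ * (Sm:Mat2)) 1 0 = s₁ 1 1 := by rw [mul_apply₂, hSm, hz1]; norm_num
    have c2 : (s₁ * (Sm:Mat2)) 1 1 = 0 := by rw [mul_apply₂, hSm, hz1]; norm_num
    rw [e_pos _ hcnd, c1, c2]
    norm_num [mul_pow]
  have hc0 : ((s₀ 1 1 : ℤ) : ℂ)^w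
      = (((N / Int.gcd (N:ℤ) ((g:Mat2) 1 0) : ℕ)) : ℂ)^w := by
    have h := congrArg (Int.cast : ℤ → ℂ) hd0
    push_cast at h
    exact h
  have hc1 : ((s₁ 1 1 : ℤ) : ℂ)^w
      = (((N / Int.gcd (N:ℤ) ((g:Mat2) 1 1) : ℕ)) : ℂ)^w := by
    have h := congrArg (Int.cast : ℤ → ℂ) hd1
    push_cast at h
    exact h
  calc thetaActR N w T ((fun _ => 1) - actV w Sm (fun _ => (1:Polynomial ℂ))) (mkCoset N g)
      = Lmap (fun m => e m - e ((Sm:Mat2) * m)) T := hstep1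
    _ = Lmap e ((MonoidAlgebra.single (1 : Mat2) (1:ℤ)
          - MonoidAlgebra.single (Sm : Mat2) (1:ℤ)) * T) := hTsplit.symm
    _ = Lmap e ((∑ m ∈ Srep, MonoidAlgebra.single m (1:ℤ)) *
            (MonoidAlgebra.single (1:Mat2) (1:ℤ) - MonoidAlgebra.single (Sm:Mat2) (1:ℤ)))
        - Lmap e ((MonoidAlgebra.single (1:Mat2) (1:ℤ)
            - MonoidAlgebra.single (Tm:Mat2) (1:ℤ)) * Y) := by
          rw [halg, Lmap_sub]
    _ = e s₀ - e (s₁ * (Sm:Mat2)) := by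
          rw [hzero, hTinf1, hsum0, hsum1, sub_zero]
    _ = C (((s₀ 1 1 : ℤ) : ℂ)^w) - C (((s₁ 1 1 : ℤ) : ℂ)^w) * X^w := by
          rw [he0, he1, C_pow, C_pow]
    _ = _ := by rw [hc0, hc1]
end
end
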